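/- The Klauder space Kl[V] over a complex inner product space V, with underlying set ℂ × V and coherent product K([z₀,𝐳],[z₀',𝐳']) = exp(conj(z₀) + z₀' + ⟨𝐳,𝐳'⟩), is slender: if ∑_k c_k exp(conj(z_{k,0}) + w₀ + ⟨𝐳_k, 𝐰⟩) = 0 for all [w₀,𝐰] ∈ ℂ × V, with the 𝐳_k pairwise distinct, then all c_k = 0. -/

import Mathlib

open scoped ComplexConjugate

/-- The Klauder space `Kl[V] = ℂ × V` with coherent product
`K([z₀,𝐳],[w₀,𝐰]) = exp(conj(z₀) + w₀ + ⟨𝐳,𝐰⟩)` is slender: if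
`∑ c_k exp(conj(z_{k,0}) + w₀ + ⟨𝐳_k,𝐰⟩) = 0` for all `[w₀,𝐰] ∈ ℂ × V` with the `𝐳_k`
pairwise distinct, then all `c_k = 0`. -/
theorem klauder_space_slender
    {V : Type*} [NormedAddCommGroup V] [InnerProductSpace ℂ V]
    (n : ℕ) (c : Fin n → ℂ) (zs : Fin n → ℂ × V)
    (hdist : ∀ i j, i ≠ j → (zs i).2 ≠ (zs j).2)
    (h : ∀ w : ℂ × V,
      ∑ i, c i * Complex.exp (conj (zs i).1 + w.1 + (inner ℂ (zs i).2 w.2 : ℂ)) = 0) :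
    ∀ i, c i = 0 := by
  classical
  -- Step 1: find `v` such that the inner products `⟨zᵢ, v⟩` are pairwise distinct.
  set ι := {p : Fin n × Fin n // p.1 ≠ p.2}
  have : Finite ι := inferInstance
  have hv : ∃ v : V, ∀ q : ι, innerₛₗ ℂ ((zs q.1.1).2 - (zs q.1.2).2) v ≠ 0 := by
    by_contra hcon
    push_neg at hcon
    have hcov : ⋃ q : ι, ((LinearMap.ker (innerₛₗ ℂ ((zs q.1.1).2 - (zs q.1.2).2)) :
        Subspace ℂ V) : Set V) = Set.univ := by
      apply Set.eq_univ_of_forall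
      intro v
      obtain ⟨q, hq⟩ := hcon v
      exact Set.mem_iUnion.mpr ⟨q, hq⟩
    obtain ⟨q, hq⟩ := Subspace.exists_eq_top_of_iUnion_eq_univ hcov
    rw [LinearMap.ker_eq_top] at hq
    have h0 : (inner ℂ ((zs q.1.1).2 - (zs q.1.2).2) ((zs q.1.1).2 - (zs q.1.2).2) : ℂ) = 0 := by
      have h1 := LinearMap.congr_fun hq ((zs q.1.1).2 - (zs q.1.2).2)
      rwa [innerₛₗ_apply_apply, LinearMap.zero_apply] at h1
    have := inner_self_eq_zero.mp h0
    exact hdist q.1.1 q.1.2 q.2 (by rwa [sub_eq_zero] at this)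
  obtain ⟨v, hv⟩ := hv
  set a : Fin n → ℂ := fun i => inner ℂ (zs i).2 v with ha
  have hainj : Function.Injective a := by
    intro i j hij
    by_contra hne
    apply hv ⟨(i, j), hne⟩
    rw [innerₛₗ_apply_apply, inner_sub_left]
    show a i - a j = 0
    rw [hij, sub_self]
  -- Step 2: choose a small positive real ε so that `exp (ε • aᵢ)` are pairwise distinct.
  set B : ℝ := ∑ i, ∑ j, ‖a i - a j‖ with hB
  have hB0 : 0 ≤ B := Finset.sum_nonneg fun i _ => Finset.sum_nonneg fun j _ => by positivity
  have hBle : ∀ i j, ‖a i - a j‖ ≤ B := by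
    intro i j
    calc ‖a i - a j‖ ≤ ∑ j', ‖a i - a j'‖ :=
          Finset.single_le_sum (f := fun j' => ‖a i - a j'‖)
            (fun k _ => by positivity) (Finset.mem_univ j)
      _ ≤ B := Finset.single_le_sum (f := fun i' => ∑ j', ‖a i' - a j'‖)
          (fun k _ => Finset.sum_nonneg fun j' _ => by positivity) (Finset.mem_univ i)
  set ε : ℝ := Real.pi / (B + 1) with hε
  have hεpos : 0 < ε := div_pos Real.pi_pos (by linarith)
  have hsmall : ∀ i j, ε * ‖a i - a j‖ < 2 * Real.pi := by
    intro i j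
    have h1 : ε * ‖a i - a j‖ ≤ ε * B :=
      mul_le_mul_of_nonneg_left (hBle i j) hεpos.le
    have h2 : ε * B < Real.pi := by
      rw [hε, div_mul_eq_mul_div, div_lt_iff₀ (by linarith)]
      nlinarith [Real.pi_pos]
    linarith [Real.pi_pos]
  set x : Fin n → ℂ := fun i => Complex.exp (ε * a i) with hx
  have hxinj : Function.Injective x := by
    intro i j hij
    rw [hx] at hij
    simp only at hij
    rw [Complex.exp_eq_exp_iff_exists_int] at hij
    obtain ⟨m, hm⟩ := hij
    have hdiff : (ε : ℂ) * (a i - a j) = m * (2 * Real.pi * Complex.I) := by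
      rw [mul_sub, hm]; ring
    have habs := congrArg (‖·‖) hdiff
    simp only [norm_mul, Complex.norm_real, Real.norm_eq_abs, Complex.norm_intCast, Complex.norm_two,
      Complex.norm_I, Complex.norm_ofNat, mul_one,
      abs_of_pos hεpos, abs_of_pos Real.pi_pos] at habs
    rcases eq_or_ne m 0 with hm0 | hm0
    · apply hainj
      have : (ε : ℂ) * (a i - a j) = 0 := by rw [hdiff, hm0]; simp
      rcases mul_eq_zero.mp this with h' | h'
      · exact absurd h' (by exact_mod_cast hεpos.ne')
      · exact sub_eq_zero.mp h'
    · exfalso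
      have h1 : (1 : ℝ) ≤ |(m : ℝ)| := by
        rw [← Int.cast_abs]
        exact_mod_cast Int.one_le_abs hm0
      have := hsmall i j
      rw [habs] at this
      nlinarith [Real.pi_pos]
  -- Step 3: Vandermonde argument with `w = (0, (k * ε) • v)`.
  set d : Fin n → ℂ := fun i => c i * Complex.exp (conj (zs i).1) with hd
  have hdz : d = 0 := by
    apply Matrix.eq_zero_of_forall_pow_sum_mul_pow_eq_zero hxinj
    intro k
    have := h ((0 : ℂ), ((k : ℂ) * ε) • v)
    simp only [inner_smul_right] at this
    calc ∑ j, d j * x j ^ (k : ℕ)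
        = ∑ j, c j * Complex.exp (conj (zs j).1 + 0 + (k : ℂ) * ε * a j) := by
          apply Finset.sum_congr rfl
          intro j _
          rw [hd, hx]
          simp only [add_zero]
          rw [Complex.exp_add, mul_assoc ((k:ℂ)) _ _, Complex.exp_nat_mul, mul_assoc]
      _ = 0 := this
  intro i
  have := congrFun hdz i
  rw [hd] at this
  simp only [Pi.zero_apply, mul_eq_zero] at this
  rcases this with h' | h'
  · exact h'
  · exact absurd h' (Complex.exp_ne_zero _)
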